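/- Let a group G act by automorphisms on a row-finite directed graph E, let Ω be a complete set of representatives of the G-orbits on E⁰, and let E_G be the graph with vertex set E⁰/G, edge set the disjoint union of r⁻¹(v) over v ∈ Ω, range r_G(e) = [r(e)] and source s_G(e) = [s(e)]. Then the monoid of coinvariants M(E)_G is isomorphic to the graph monoid M(E_G). -/

import Mathlib

/-- The defining congruence of the graph monoid `M(E)` of a directed graph. -/
noncomputable def graphCon (V E : Type*) (r s : E → V) : AddCon (V →₀ ℕ) :=
  addConGen fun x y => ∃ v : V, (∃ e, r e = v) ∧
    x = Finsupp.single v 1 ∧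
    y = ∑ᶠ e ∈ {e : E | r e = v}, Finsupp.single (s e) 1

/-- The defining congruence of the monoid of coinvariants `M(E)_G`: the graph
monoid relations together with the identifications `a_v = a_{g • v}`. -/
noncomputable def coinvCon (G : Type*) (V E : Type*) [Group G] [MulAction G V] (r s : E → V) :
    AddCon (V →₀ ℕ) :=
  addConGen fun x y =>
    (∃ v : V, (∃ e, r e = v) ∧
      x = Finsupp.single v 1 ∧
      y = ∑ᶠ e ∈ {e : E | r e = v}, Finsupp.single (s e) 1) ∨
    (∃ (g : G) (v : V), x = Finsupp.single v 1 ∧ y = Finsupp.single (g • v) 1)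

section Helpers

private lemma addCon_sum {M ι : Type*} [AddCommMonoid M] (c : AddCon M)
    (t : Finset ι) (f g : ι → M) (h : ∀ i ∈ t, c (f i) (g i)) :
    c (∑ i ∈ t, f i) (∑ i ∈ t, g i) := by
  classical
  induction t using Finset.induction_on with
  | empty => simpa using c.refl 0
  | @insert a t ha ih =>
    rw [Finset.sum_insert ha, Finset.sum_insert ha]
    exact c.add (h a (Finset.mem_insert_self a t))
      (ih fun i hi => h i (Finset.mem_insert_of_mem hi))

private lemma addCon_nsmul {M : Type*} [AddCommMonoid M] (c : AddCon M) (n : ℕ)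
    {x y : M} (h : c x y) : c (n • x) (n • y) := by
  induction n with
  | zero => simpa using c.refl 0
  | succ n ih => rw [succ_nsmul, succ_nsmul]; exact c.add ih h

variable {G V : Type*} [Group G] [MulAction G V] {Ω : Set V}

private noncomputable def repQ
    (hΩ : ∀ v : V, ∃! w : V, w ∈ Ω ∧ w ∈ MulAction.orbit G v)
    (c : Quotient (MulAction.orbitRel G V)) : V :=
  (hΩ c.out).choose

variable (hΩ : ∀ v : V, ∃! w : V, w ∈ Ω ∧ w ∈ MulAction.orbit G v)

private lemma repQ_mem (c : Quotient (MulAction.orbitRel G V)) : repQ hΩ c ∈ Ω :=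
  (hΩ c.out).choose_spec.1.1

private lemma mk_repQ (c : Quotient (MulAction.orbitRel G V)) :
    Quotient.mk (MulAction.orbitRel G V) (repQ hΩ c) = c := by
  have h := (hΩ c.out).choose_spec.1.2
  exact (Quotient.sound (MulAction.orbitRel_apply.mpr h)).trans c.out_eq

private lemma repQ_unique {w : V} {c : Quotient (MulAction.orbitRel G V)}
    (hw : w ∈ Ω) (hc : Quotient.mk (MulAction.orbitRel G V) w = c) :
    w = repQ hΩ c := by
  refine (hΩ c.out).choose_spec.2 w ⟨hw, ?_⟩
  exact MulAction.orbitRel_apply.mp (Quotient.eq.mp (hc.trans c.out_eq.symm))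

private lemma exists_smul_repQ (v : V) :
    ∃ g : G, g • v = repQ hΩ (Quotient.mk (MulAction.orbitRel G V) v) := by
  have h := mk_repQ hΩ (Quotient.mk (MulAction.orbitRel G V) v)
  exact MulAction.mem_orbit_iff.mp (MulAction.orbitRel_apply.mp (Quotient.eq.mp h))

private lemma val_image_setOf {E : Type*} (r : E → V)
    (c : Quotient (MulAction.orbitRel G V)) :
    Subtype.val ''
        {ee : {e : E // r e ∈ Ω} | Quotient.mk (MulAction.orbitRel G V) (r ee.1) = c}
      = {e : E | r e = repQ hΩ c} := by
  ext e
  constructor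
  · rintro ⟨⟨e, he⟩, hmem, rfl⟩
    exact repQ_unique hΩ he hmem
  · intro he
    refine ⟨⟨e, he ▸ repQ_mem hΩ c⟩, ?_, rfl⟩
    show Quotient.mk (MulAction.orbitRel G V) (r e) = c
    rw [he, mk_repQ]

private lemma finsum_subtype {E M : Type*} [AddCommMonoid M] (r : E → V)
    (c : Quotient (MulAction.orbitRel G V)) (f : E → M) :
    (∑ᶠ ee ∈ {ee : {e : E // r e ∈ Ω} |
        Quotient.mk (MulAction.orbitRel G V) (r ee.1) = c}, f ee.1)
      = ∑ᶠ e ∈ {e : E | r e = repQ hΩ c}, f e := by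
  rw [← val_image_setOf hΩ r c,
    finsum_mem_image (Subtype.val_injective.injOn)]

private lemma finsum_orbit {E : Type*} [MulAction G E] (r s : E → V)
    (hs : ∀ (g : G) (e : E), g • s e = s (g • e))
    (hr : ∀ (g : G) (e : E), g • r e = r (g • e)) (g : G) (v : V) :
    (∑ᶠ e ∈ {e : E | r e = g • v},
        Finsupp.single (Quotient.mk (MulAction.orbitRel G V) (s e)) (1 : ℕ))
      = ∑ᶠ e ∈ {e : E | r e = v},
        Finsupp.single (Quotient.mk (MulAction.orbitRel G V) (s e)) 1 := by
  have himg : (fun e => g • e) '' {e : E | r e = v} = {e : E | r e = g • v} := by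
    ext e
    constructor
    · rintro ⟨e, he, rfl⟩
      show r (g • e) = g • v
      rw [← hr, he]
    · intro he
      refine ⟨g⁻¹ • e, ?_, smul_inv_smul g e⟩
      show r (g⁻¹ • e) = v
      rw [← hr, he, inv_smul_smul]
  rw [← himg, finsum_mem_image (MulAction.injective g).injOn]
  refine finsum_mem_congr rfl fun e _ => ?_
  congr 1
  exact Quotient.sound (MulAction.orbitRel_apply.mpr ⟨g, hs g e⟩)

end Helpers

/-- If a group `G` acts by automorphisms on a row-finite directed graph `E`, `Ω`
is a complete set of representatives of the `G`-orbits on vertices, and `E_G` is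
the quotient graph (vertices `E⁰/G`, edges `⋃_{v ∈ Ω} r⁻¹(v)`, with the induced
range and source maps), then the monoid of coinvariants `M(E)_G` is isomorphic to
the graph monoid `M(E_G)`, via `[a_v] ↦ a_{[v]}`. -/
theorem stmt_15 {G V E : Type*} [Group G] [MulAction G V] [MulAction G E]
    (r s : E → V)
    (hrow : ∀ v : V, {e : E | r e = v}.Finite)
    (hs : ∀ (g : G) (e : E), g • s e = s (g • e))
    (hr : ∀ (g : G) (e : E), g • r e = r (g • e))
    (Ω : Set V)
    (hΩ : ∀ v : V, ∃! w : V, w ∈ Ω ∧ w ∈ MulAction.orbit G v) :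
    ∃ φ : (coinvCon G V E r s).Quotient ≃+
        (graphCon (Quotient (MulAction.orbitRel G V)) {e : E // r e ∈ Ω}
          (fun e => Quotient.mk (MulAction.orbitRel G V) (r e.1))
          (fun e => Quotient.mk (MulAction.orbitRel G V) (s e.1))).Quotient,
      ∀ v : V,
        φ ((coinvCon G V E r s).mk' (Finsupp.single v 1)) =
          (graphCon (Quotient (MulAction.orbitRel G V)) {e : E // r e ∈ Ω}
            (fun e => Quotient.mk (MulAction.orbitRel G V) (r e.1))
            (fun e => Quotient.mk (MulAction.orbitRel G V) (s e.1))).mk'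
            (Finsupp.single (Quotient.mk (MulAction.orbitRel G V) v) 1) := by
  classical
  set c₁ := coinvCon G V E r s with hc₁def
  set c₂ := graphCon (Quotient (MulAction.orbitRel G V)) {e : E // r e ∈ Ω}
      (fun e => Quotient.mk (MulAction.orbitRel G V) (r e.1))
      (fun e => Quotient.mk (MulAction.orbitRel G V) (s e.1)) with hc₂def
  set F : (V →₀ ℕ) →+ c₂.Quotient :=
    c₂.mk'.comp (Finsupp.mapDomain.addMonoidHom (Quotient.mk (MulAction.orbitRel G V)))
    with hFdef
  set B : (Quotient (MulAction.orbitRel G V) →₀ ℕ) →+ c₁.Quotient :=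
    c₁.mk'.comp (Finsupp.mapDomain.addMonoidHom (repQ hΩ)) with hBdef
  have Fapp : ∀ x : V →₀ ℕ,
      F x = c₂.mk' (Finsupp.mapDomain (Quotient.mk (MulAction.orbitRel G V)) x) :=
    fun x => rfl
  have Bapp : ∀ x : Quotient (MulAction.orbitRel G V) →₀ ℕ,
      B x = c₁.mk' (Finsupp.mapDomain (repQ hΩ) x) := fun x => rfl
  have hmapA : ∀ v : V,
      Finsupp.mapDomain (Quotient.mk (MulAction.orbitRel G V))
          (∑ᶠ e ∈ {e : E | r e = v}, Finsupp.single (s e) (1 : ℕ))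
        = ∑ᶠ ee ∈ {ee : {e : E // r e ∈ Ω} |
              Quotient.mk (MulAction.orbitRel G V) (r ee.1)
                = Quotient.mk (MulAction.orbitRel G V) v},
            Finsupp.single (Quotient.mk (MulAction.orbitRel G V) (s ee.1)) 1 := by
    intro v
    obtain ⟨g, hg⟩ := exists_smul_repQ hΩ v
    rw [finsum_subtype hΩ r (Quotient.mk (MulAction.orbitRel G V) v)
        (fun e => Finsupp.single (Quotient.mk (MulAction.orbitRel G V) (s e)) (1 : ℕ)),
      ← hg, finsum_orbit r s hs hr g v,
      finsum_mem_eq_finite_toFinset_sum _ (hrow v), Finsupp.mapDomain_finset_sum]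
    simp only [Finsupp.mapDomain_single]
    rw [← finsum_mem_eq_finite_toFinset_sum
        (fun e => Finsupp.single (Quotient.mk (MulAction.orbitRel G V) (s e)) (1 : ℕ))
        (hrow v)]
  have hker₁ : c₁ ≤ AddCon.ker F := by
    rw [hc₁def, coinvCon]
    refine AddCon.addConGen_le.mpr fun x y hxy => ?_
    rw [AddCon.ker_rel]
    rcases hxy with ⟨v, ⟨e₀, he₀⟩, rfl, rfl⟩ | ⟨g, v, rfl, rfl⟩
    · rw [Fapp, Fapp, Finsupp.mapDomain_single, hmapA v, AddCon.coe_mk']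
      refine c₂.eq.mpr ?_
      obtain ⟨g, hg⟩ := exists_smul_repQ hΩ v
      have hw : r (g • e₀) ∈ Ω := by
        rw [← hr, he₀, hg]; exact repQ_mem hΩ _
      refine AddConGen.Rel.of _ _
        ⟨Quotient.mk (MulAction.orbitRel G V) v, ⟨⟨g • e₀, hw⟩, ?_⟩, rfl, rfl⟩
      show Quotient.mk (MulAction.orbitRel G V) (r (g • e₀))
          = Quotient.mk (MulAction.orbitRel G V) v
      rw [← hr, he₀, hg, mk_repQ]
    · rw [Fapp, Fapp, Finsupp.mapDomain_single, Finsupp.mapDomain_single]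
      have hq : Quotient.mk (MulAction.orbitRel G V) (g • v)
          = Quotient.mk (MulAction.orbitRel G V) v :=
        Quotient.sound (MulAction.orbitRel_apply.mpr ⟨g, rfl⟩)
      rw [hq]
  have hker₂ : c₂ ≤ AddCon.ker B := by
    rw [hc₂def, graphCon]
    refine AddCon.addConGen_le.mpr fun x y hxy => ?_
    rw [AddCon.ker_rel]
    obtain ⟨c, ⟨e₀, he₀⟩, rfl, rfl⟩ := hxy
    have hw : r e₀.1 = repQ hΩ c := repQ_unique hΩ e₀.2 he₀
    rw [Bapp, Bapp, Finsupp.mapDomain_single,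
      finsum_subtype hΩ r c
        (fun e => Finsupp.single (Quotient.mk (MulAction.orbitRel G V) (s e)) (1 : ℕ)),
      finsum_mem_eq_finite_toFinset_sum _ (hrow _), Finsupp.mapDomain_finset_sum]
    simp only [Finsupp.mapDomain_single]
    rw [AddCon.coe_mk']
    refine c₁.eq.mpr ?_
    refine c₁.trans
      (AddConGen.Rel.of _ _ (Or.inl ⟨repQ hΩ c, ⟨e₀.1, hw⟩, rfl, rfl⟩)) ?_
    rw [finsum_mem_eq_finite_toFinset_sum _ (hrow _)]
    refine addCon_sum c₁ _ _ _ fun e _ => ?_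
    obtain ⟨g, hg⟩ := exists_smul_repQ hΩ (s e)
    have h : c₁ (Finsupp.single (s e) 1) (Finsupp.single (g • s e) 1) :=
      AddConGen.Rel.of _ _ (Or.inr ⟨g, s e, rfl, rfl⟩)
    rw [hg] at h
    exact h
  have key : ∀ x : V →₀ ℕ,
      c₁ (Finsupp.mapDomain
        (repQ hΩ ∘ Quotient.mk (MulAction.orbitRel G V)) x) x := by
    intro x
    induction x using Finsupp.induction with
    | zero => rw [Finsupp.mapDomain_zero]; exact c₁.refl 0
    | single_add a n f hf hn ih =>
      rw [Finsupp.mapDomain_add, Finsupp.mapDomain_single]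
      refine c₁.add ?_ ih
      obtain ⟨g, hg⟩ := exists_smul_repQ hΩ a
      have h1 : c₁ (Finsupp.single a 1)
          (Finsupp.single (repQ hΩ (Quotient.mk (MulAction.orbitRel G V) a)) 1) := by
        have h : c₁ (Finsupp.single a 1) (Finsupp.single (g • a) 1) :=
          AddConGen.Rel.of _ _ (Or.inr ⟨g, a, rfl, rfl⟩)
        rw [hg] at h
        exact h
      have h2 := addCon_nsmul c₁ n (c₁.symm h1)
      simpa [Finsupp.smul_single, smul_eq_mul, mul_one] using h2
  set Fhat := c₁.lift F hker₁ with hFhatdef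
  set Bhat := c₂.lift B hker₂ with hBhatdef
  have li : ∀ q : c₁.Quotient, Bhat (Fhat q) = q := by
    refine fun q => AddCon.induction_on q fun x => ?_
    rw [show (x : c₁.Quotient) = c₁.mk' x from rfl, hFhatdef, AddCon.lift_mk', Fapp,
      hBhatdef, AddCon.lift_mk', Bapp, ← Finsupp.mapDomain_comp, AddCon.coe_mk']
    exact c₁.eq.mpr (key x)
  have ri : ∀ q : c₂.Quotient, Fhat (Bhat q) = q := by
    refine fun q => AddCon.induction_on q fun y => ?_
    rw [show (y : c₂.Quotient) = c₂.mk' y from rfl, hBhatdef, AddCon.lift_mk', Bapp,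
      hFhatdef, AddCon.lift_mk', Fapp, ← Finsupp.mapDomain_comp,
      show (Quotient.mk (MulAction.orbitRel G V) ∘ repQ hΩ) = id from
        funext (mk_repQ hΩ),
      Finsupp.mapDomain_id, AddCon.coe_mk']
  refine ⟨{ toFun := Fhat, invFun := Bhat, left_inv := li, right_inv := ri,
            map_add' := Fhat.map_add }, fun v => ?_⟩
  show Fhat (c₁.mk' (Finsupp.single v 1)) = _
  rw [hFhatdef, AddCon.lift_mk', Fapp, Finsupp.mapDomain_single]
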